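/- Let X and Y be finite nonempty types, S : Finset X a training set, and x₀ : X a point with x₀ ∉ S. Then for every deterministic learning algorithm A : ((↥S) → Y) → Y that predicts the label of x₀ from the restriction of the target function to S, the number of target functions it predicts correctly satisfies: Fintype.card {f : X → Y // A (fun s => f s) = f x₀} · Fintype.card Y = Fintype.card (X → Y). Equivalently, averaged uniformly over all possible target functions f : X → Y, any algorithm's probability of correctly predicting f(x₀) from f restricted to S is exactly 1 / |Y|. -/
import Mathlib


open scoped Classical

/-- Finite off-training-set No Free Lunch theorem: averaged uniformly over all
target functions `f : X → Y`, any deterministic algorithm predicting `f x₀`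
from the restriction of `f` to a training set `S` (with `x₀ ∉ S`) is correct
with probability exactly `1 / |Y|`. -/
theorem no_free_lunch
    {X Y : Type*} [Fintype X] [Fintype Y] [Nonempty X] [Nonempty Y]
    (S : Finset X) (x₀ : X) (hx₀ : x₀ ∉ S)
    (A : ((↥S) → Y) → Y) :
    Fintype.card {f : X → Y // A (fun s => f s) = f x₀} * Fintype.card Y =
      Fintype.card (X → Y) := by
  have hne : ∀ s : ↥S, (s : X) ≠ x₀ := by
    rintro s rfl; exact hx₀ s.2
  have hres : ∀ (g : X → Y) (y : Y),
      (fun s : ↥S => Function.update g x₀ y s) = (fun s : ↥S => g s) := by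
    intro g y
    funext s
    exact Function.update_of_ne (hne s) _ _
  have e : {f : X → Y // A (fun s => f s) = f x₀} × Y ≃ (X → Y) :=
    { toFun := fun p => Function.update p.1.1 x₀ p.2
      invFun := fun g =>
        (⟨Function.update g x₀ (A (fun s => g s)), by
            rw [hres]
            simp [Function.update_self]⟩, g x₀)
      left_inv := by
        rintro ⟨⟨f, hf⟩, y⟩
        have h1 : Function.update (Function.update f x₀ y) x₀
            (A fun s => Function.update f x₀ y s) = f := by
          rw [hres, hf]
          simp [Function.update_idem, Function.update_eq_self]
        simp only [Prod.mk.injEq, Subtype.mk.injEq]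
        exact ⟨h1, Function.update_self _ _ _⟩
      right_inv := by
        intro g
        simp [Function.update_idem, Function.update_eq_self] }
  calc Fintype.card {f : X → Y // A (fun s => f s) = f x₀} * Fintype.card Y
      = Fintype.card ({f : X → Y // A (fun s => f s) = f x₀} × Y) :=
        (Fintype.card_prod _ _).symm
    _ = Fintype.card (X → Y) := Fintype.card_congr e
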